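/- Let E be a nonempty compact subset of ℝ^d and let 0 ≤ s < mubd E. Then there exists μ ∈ 𝒫(E) such that for every x ∈ ℝ^d there are arbitrarily small r > 0 with μ(B(x,r)) ≤ r^s. -/

import Mathlib

open MeasureTheory Metric Filter Set Topology

/-- The topological support of a measure: points all of whose neighbourhoods
have positive measure. -/
def msupport {X : Type*} [TopologicalSpace X] [MeasurableSpace X]
    (μ : Measure X) : Set X :=
  {x | ∀ U : Set X, IsOpen U → x ∈ U → μ U ≠ 0}

/-- The collection of Borel probability measures whose support is contained in `E`. -/
def probOn {X : Type*} [TopologicalSpace X] [MeasurableSpace X]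
    (E : Set X) : Set (Measure X) :=
  {μ | IsProbabilityMeasure μ ∧ msupport μ ⊆ E}

/-- The correlation integral `∫ μ(B(x,r)) dμ(x)` (as a real number). -/
noncomputable def corrInt {X : Type*} [MetricSpace X] [MeasurableSpace X]
    (μ : Measure X) (r : ℝ) : ℝ :=
  (∫⁻ x, μ (closedBall x r) ∂μ).toReal

/-- Lower correlation dimension of a measure. -/
noncomputable def lcod {X : Type*} [MetricSpace X] [MeasurableSpace X]
    (μ : Measure X) : ℝ :=
  liminf (fun r : ℝ => Real.log (corrInt μ r) / Real.log r) (𝓝[>] 0)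

/-- Upper correlation dimension of a measure. -/
noncomputable def ucod {X : Type*} [MetricSpace X] [MeasurableSpace X]
    (μ : Measure X) : ℝ :=
  limsup (fun r : ℝ => Real.log (corrInt μ r) / Real.log r) (𝓝[>] 0)

/-- Upper correlation dimension of a set. -/
noncomputable def ucodSet {X : Type*} [MetricSpace X] [MeasurableSpace X]
    (E : Set X) : ℝ :=
  sSup (ucod '' probOn E)

/-- `coverNum E r` is the least number of sets of diameter at most `r` needed to cover `E`. -/
noncomputable def coverNum {X : Type*} [MetricSpace X] (E : Set X) (r : ℝ) : ℕ :=
  sInf {n : ℕ | ∃ 𝒰 : Finset (Set X), 𝒰.card = n ∧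
    (∀ U ∈ 𝒰, EMetric.diam U ≤ ENNReal.ofReal r) ∧ E ⊆ ⋃ U ∈ 𝒰, U}

/-- Lower box-counting dimension. -/
noncomputable def lbd {X : Type*} [MetricSpace X] (E : Set X) : ℝ :=
  liminf (fun r : ℝ => Real.log (coverNum E r : ℝ) / (-Real.log r)) (𝓝[>] 0)

/-- Upper box-counting dimension. -/
noncomputable def ubd {X : Type*} [MetricSpace X] (E : Set X) : ℝ :=
  limsup (fun r : ℝ => Real.log (coverNum E r : ℝ) / (-Real.log r)) (𝓝[>] 0)

/-- Modified lower box dimension. -/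
noncomputable def mlbd {X : Type*} [MetricSpace X] (E : Set X) : ℝ :=
  sInf {s : ℝ | ∃ F : ℕ → Set X, (∀ i, IsCompact (F i)) ∧ E ⊆ ⋃ i, F i ∧
    ∀ i, lbd (F i) ≤ s}

/-- Modified upper box dimension (= packing dimension). -/
noncomputable def mubd {X : Type*} [MetricSpace X] (E : Set X) : ℝ :=
  sInf {s : ℝ | ∃ F : ℕ → Set X, (∀ i, IsCompact (F i)) ∧ E ⊆ ⋃ i, F i ∧
    ∀ i, ubd (F i) ≤ s}

/-- Fourier transform of a measure on Euclidean space. -/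
noncomputable def ftMeas {d : ℕ} (μ : Measure (EuclideanSpace ℝ (Fin d)))
    (z : EuclideanSpace ℝ (Fin d)) : ℂ :=
  ∫ x, Complex.exp (Complex.I * (inner ℝ x z : ℝ)) ∂μ

open scoped Classical
section CoverNum

variable {X : Type*} [MetricSpace X] {A B : Set X} {r t : ℝ}

lemma coverNum_le_card {𝒰 : Finset (Set X)}
    (hdiam : ∀ U ∈ 𝒰, EMetric.diam U ≤ ENNReal.ofReal r) (hcov : A ⊆ ⋃ U ∈ 𝒰, U) :
    coverNum A r ≤ 𝒰.card :=
  Nat.sInf_le ⟨𝒰, rfl, hdiam, hcov⟩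

lemma exists_finite_cover (hA : IsCompact A) (hr : 0 < r) :
    ∃ 𝒰 : Finset (Set X), (∀ U ∈ 𝒰, EMetric.diam U ≤ ENNReal.ofReal r) ∧ A ⊆ ⋃ U ∈ 𝒰, U := by
  obtain ⟨T, hT⟩ := hA.elim_finite_subcover (fun x : X => ball x (r / 3))
    (fun x => isOpen_ball) (fun a ha => mem_iUnion.mpr ⟨a, mem_ball_self (by linarith)⟩)
  refine ⟨T.image (fun x => ball x (r / 3)), ?_, ?_⟩
  · intro U hU
    simp only [Finset.mem_image] at hU
    obtain ⟨x, -, rfl⟩ := hU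
    refine EMetric.diam_le fun a ha b hb => ?_
    rw [edist_le_ofReal hr.le]
    have := mem_ball.mp ha; have := mem_ball.mp hb
    calc dist a b ≤ dist a x + dist x b := dist_triangle _ _ _
      _ ≤ r := by rw [dist_comm x b] at *; linarith
  · intro a ha
    obtain ⟨x, hx, hax⟩ := mem_iUnion₂.mp (hT ha)
    exact mem_iUnion₂.mpr ⟨ball x (r / 3), Finset.mem_image_of_mem _ hx, hax⟩

lemma coverNum_spec (hA : IsCompact A) (hr : 0 < r) :
    ∃ 𝒰 : Finset (Set X), 𝒰.card = coverNum A r ∧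
      (∀ U ∈ 𝒰, EMetric.diam U ≤ ENNReal.ofReal r) ∧ A ⊆ ⋃ U ∈ 𝒰, U := by
  have hne : {n : ℕ | ∃ 𝒰 : Finset (Set X), 𝒰.card = n ∧
      (∀ U ∈ 𝒰, EMetric.diam U ≤ ENNReal.ofReal r) ∧ A ⊆ ⋃ U ∈ 𝒰, U}.Nonempty := by
    obtain ⟨𝒰, h1, h2⟩ := exists_finite_cover hA hr
    exact ⟨𝒰.card, 𝒰, rfl, h1, h2⟩
  exact Nat.sInf_mem hne

lemma one_le_coverNum (hA : IsCompact A) (hne : A.Nonempty) (hr : 0 < r) :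
    1 ≤ coverNum A r := by
  obtain ⟨𝒰, hcard, -, hcov⟩ := coverNum_spec hA hr
  rcases Nat.eq_zero_or_pos (coverNum A r) with h | h
  · exfalso
    rw [h, Finset.card_eq_zero] at hcard
    subst hcard
    obtain ⟨a, ha⟩ := hne
    simpa using hcov ha
  · exact h

lemma coverNum_mono (hAB : A ⊆ B) (hB : IsCompact B) (hr : 0 < r) :
    coverNum A r ≤ coverNum B r := by
  obtain ⟨𝒰, hcard, h1, h2⟩ := coverNum_spec hB hr
  exact hcard ▸ coverNum_le_card h1 (hAB.trans h2)

lemma coverNum_empty (r : ℝ) : coverNum (∅ : Set X) r = 0 :=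
  Nat.sInf_eq_zero.mpr (Or.inl ⟨∅, by simp⟩)

lemma ubd_empty : ubd (∅ : Set X) = 0 := by
  have : (fun r : ℝ => Real.log ((coverNum (∅ : Set X) r : ℕ) : ℝ) / (-Real.log r)) =
      fun _ => (0 : ℝ) := by
    funext r; rw [coverNum_empty]; simp
  rw [ubd, this, limsup_const]

end CoverNum
section Freq

open scoped Classical

variable {X : Type*} [MetricSpace X] {A B : Set X} {t : ℝ}

lemma eventually_nonneg_quot (hA : IsCompact A) (hne : A.Nonempty) :
    ∀ᶠ r in 𝓝[>] (0:ℝ), 0 ≤ Real.log (coverNum A r : ℝ) / (-Real.log r) := by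
  filter_upwards [Ioo_mem_nhdsGT_of_mem (by norm_num : (0:ℝ) ∈ Set.Ico (0:ℝ) 1)]
    with r hr
  obtain ⟨hr0, hr1⟩ := hr
  have h1 : 1 ≤ coverNum A r := one_le_coverNum hA hne hr0
  have hlog : 0 ≤ Real.log (coverNum A r : ℝ) :=
    Real.log_nonneg (by exact_mod_cast h1)
  have : 0 < -Real.log r := by
    have := Real.log_neg hr0 hr1; linarith
  positivity

lemma ubd_nonneg (hA : IsCompact A) (hne : A.Nonempty) : 0 ≤ ubd A := by
  rw [ubd, limsup_eq]
  rcases Set.eq_empty_or_nonempty {a : ℝ | ∀ᶠ r in 𝓝[>] (0:ℝ),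
      Real.log (coverNum A r : ℝ) / (-Real.log r) ≤ a} with h | h
  · rw [h, Real.sInf_empty]
  · refine le_csInf h fun a ha => ?_
    obtain ⟨r, h0, hle⟩ := ((eventually_nonneg_quot hA hne).and ha).exists
    linarith

lemma freq_coverNum (hA : IsCompact A) (hne : A.Nonempty) (ht : 0 ≤ t) (h : t < ubd A) :
    ∀ ε > (0:ℝ), ∃ r : ℝ, 0 < r ∧ r < ε ∧ (r:ℝ) ^ (-t) < (coverNum A r : ℝ) := by
  intro ε hε
  by_contra hcon
  push_neg at hcon
  have hev : ∀ᶠ r in 𝓝[>] (0:ℝ), Real.log (coverNum A r : ℝ) / (-Real.log r) ≤ t := by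
    filter_upwards [Ioo_mem_nhdsGT_of_mem
      (by constructor <;> simp [lt_min_iff, hε] : (0:ℝ) ∈ Set.Ico (0:ℝ) (min ε 1))]
      with r hr
    obtain ⟨hr0, hr2⟩ := hr
    rw [lt_min_iff] at hr2
    have hN : (coverNum A r : ℝ) ≤ r ^ (-t) := hcon r hr0 hr2.1
    have hN1 : (1:ℝ) ≤ (coverNum A r : ℝ) := by
      exact_mod_cast one_le_coverNum hA hne hr0
    have hlogr : 0 < -Real.log r := by
      have := Real.log_neg hr0 hr2.2; linarith
    rw [div_le_iff₀ hlogr]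
    calc Real.log (coverNum A r : ℝ) ≤ Real.log (r ^ (-t)) :=
          Real.log_le_log (by linarith) hN
      _ = -t * Real.log r := Real.log_rpow hr0 _
      _ = t * -Real.log r := by ring
  have hbdd : BddBelow {a : ℝ | ∀ᶠ r in 𝓝[>] (0:ℝ),
      Real.log (coverNum A r : ℝ) / (-Real.log r) ≤ a} := by
    refine ⟨0, fun a ha => ?_⟩
    obtain ⟨r, h0, hle⟩ := ((eventually_nonneg_quot hA hne).and ha).exists
    linarith
  have : ubd A ≤ t := by
    rw [ubd, limsup_eq]
    exact csInf_le hbdd hev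
  linarith

lemma exists_separated (hA : IsCompact A) {r : ℝ} (hr : 0 < r) :
    ∃ P : Finset X, ↑P ⊆ A ∧ (∀ p ∈ P, ∀ q ∈ P, p ≠ q → r ≤ dist p q) ∧
      coverNum A (2 * r) ≤ P.card := by
  obtain ⟨T, hT⟩ := hA.elim_finite_subcover (fun x : X => ball x (r / 3))
    (fun x => isOpen_ball) (fun a ha => mem_iUnion.mpr ⟨a, mem_ball_self (by linarith)⟩)
  have hbound : ∀ P : Finset X, ↑P ⊆ A →
      (∀ p ∈ P, ∀ q ∈ P, p ≠ q → r ≤ dist p q) → P.card ≤ T.card := by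
    intro P hPA hsep
    have hch : ∀ p : X, ∃ x : X, p ∈ P → (x ∈ T ∧ p ∈ ball x (r / 3)) := by
      intro p
      by_cases hp : p ∈ P
      · obtain ⟨x, hx, hpx⟩ := mem_iUnion₂.mp (hT (hPA hp))
        exact ⟨x, fun _ => ⟨hx, hpx⟩⟩
      · exact ⟨p, fun h => absurd h hp⟩
    choose f hf using hch
    refine Finset.card_le_card_of_injOn f (fun p hp => (hf p hp).1) ?_
    intro p hp q hq hfpq
    rw [Finset.mem_coe] at hp hq
    by_contra hne'
    have h1 : dist p (f p) < r / 3 := mem_ball.mp (hf p hp).2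
    have h2 : dist q (f q) < r / 3 := mem_ball.mp (hf q hq).2
    have hd : dist p q ≤ dist p (f p) + dist (f q) q := by
      calc dist p q ≤ dist p (f q) + dist (f q) q := dist_triangle _ _ _
        _ = dist p (f p) + dist (f q) q := by rw [hfpq]
    rw [dist_comm (f q) q] at hd
    have := hsep p hp q hq hne'
    linarith
  set 𝒞 : Set ℕ := {n | ∃ P : Finset X, ↑P ⊆ A ∧
    (∀ p ∈ P, ∀ q ∈ P, p ≠ q → r ≤ dist p q) ∧ P.card = n} with h𝒞
  have h0 : 0 ∈ 𝒞 := ⟨∅, by simp⟩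
  have hbdd : BddAbove 𝒞 := by
    refine ⟨T.card, fun n hn => ?_⟩
    obtain ⟨P, h1, h2, rfl⟩ := hn
    exact hbound P h1 h2
  obtain ⟨P, hPA, hsep, hPcard⟩ := Nat.sSup_mem ⟨0, h0⟩ hbdd
  refine ⟨P, hPA, hsep, ?_⟩
  have hcov : A ⊆ ⋃ p ∈ P, closedBall p r := by
    by_contra hcov
    rw [Set.not_subset] at hcov
    obtain ⟨a, haA, hanot⟩ := hcov
    have hfar : ∀ p ∈ P, r < dist a p := by
      intro p hp
      by_contra hle
      push_neg at hle
      exact hanot (mem_iUnion₂.mpr ⟨p, hp, mem_closedBall.mpr hle⟩)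
    have haP : a ∉ P := fun h => by
      have := hfar a h; simp at this; linarith
    have : P.card + 1 ∈ 𝒞 := by
      refine ⟨insert a P, ?_, ?_, by rw [Finset.card_insert_of_notMem haP]⟩
      · intro x hx
        rcases Finset.mem_insert.mp hx with rfl | hx
        · exact haA
        · exact hPA hx
      · intro p hp q hq hpq
        rcases Finset.mem_insert.mp hp with rfl | hp' <;>
          rcases Finset.mem_insert.mp hq with rfl | hq'
        · exact absurd rfl hpq
        · exact le_of_lt (hfar q hq')
        · rw [dist_comm]; exact le_of_lt (hfar p hp')
        · exact hsep p hp' q hq' hpq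
    have := le_csSup hbdd this
    rw [hPcard] at this
    omega
  have hdiam : ∀ U ∈ P.image (fun p => closedBall p r),
      EMetric.diam U ≤ ENNReal.ofReal (2 * r) := by
    intro U hU
    simp only [Finset.mem_image] at hU
    obtain ⟨p, -, rfl⟩ := hU
    refine EMetric.diam_le fun a ha b hb => ?_
    rw [edist_le_ofReal (by linarith)]
    calc dist a b ≤ dist a p + dist p b := dist_triangle _ _ _
      _ ≤ 2 * r := by
          rw [dist_comm p b] at *
          have := mem_closedBall.mp ha; have := mem_closedBall.mp hb; linarith
  have hcov' : A ⊆ ⋃ U ∈ P.image (fun p => closedBall p r), U := by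
    intro a ha
    obtain ⟨p, hp, hap⟩ := mem_iUnion₂.mp (hcov ha)
    exact mem_iUnion₂.mpr ⟨closedBall p r, Finset.mem_image_of_mem _ hp, hap⟩
  exact (coverNum_le_card hdiam hcov').trans (Finset.card_image_le)

end Freq
section LemmaA

variable {X : Type*} [MetricSpace X] [SecondCountableTopology X]

lemma combine_covers (E : Set X) {t : ℝ} (ht : 0 ≤ t) (good : Set (Set X))
    (hcount : good.Countable)
    (h : ∀ V ∈ good, ∃ F : ℕ → Set X, (∀ i, IsCompact (F i)) ∧ E ∩ V ⊆ ⋃ i, F i ∧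
      ∀ i, ubd (F i) ≤ t) :
    ∃ G : ℕ → Set X, (∀ i, IsCompact (G i)) ∧ E ∩ ⋃₀ good ⊆ ⋃ i, G i ∧
      ∀ i, ubd (G i) ≤ t := by
  rcases good.eq_empty_or_nonempty with rfl | hne
  · exact ⟨fun _ => ∅, fun _ => isCompact_empty, by simp, fun _ => by rw [ubd_empty]; exact ht⟩
  · obtain ⟨f, rfl⟩ := hcount.exists_eq_range hne
    have hch : ∀ n : ℕ, ∃ F : ℕ → Set X, (∀ i, IsCompact (F i)) ∧ E ∩ f n ⊆ ⋃ i, F i ∧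
        ∀ i, ubd (F i) ≤ t := fun n => h (f n) ⟨n, rfl⟩
    choose F hF1 hF2 hF3 using hch
    refine ⟨fun m => F m.unpair.1 m.unpair.2, fun m => hF1 _ _, ?_, fun m => hF3 _ _⟩
    rintro x ⟨hxE, V, ⟨n, rfl⟩, hxV⟩
    obtain ⟨i, hi⟩ := mem_iUnion.mp (hF2 n ⟨hxE, hxV⟩)
    exact mem_iUnion.mpr ⟨Nat.pair n i, by simpa [Nat.unpair_pair] using hi⟩

lemma lemmaA (E : Set X) (hc : IsCompact E) (hne : E.Nonempty) {t : ℝ} (ht0 : 0 ≤ t)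
    (hlt : t < mubd E) :
    ∃ K : Set X, IsCompact K ∧ K ⊆ E ∧ K.Nonempty ∧
      ∀ p ∈ K, ∀ ρ > (0:ℝ), ∀ ε > (0:ℝ), ∃ r : ℝ, 0 < r ∧ r < ε ∧
        (r:ℝ) ^ (-t) < (coverNum (K ∩ closedBall p ρ) r : ℝ) := by
  classical
  set cB := TopologicalSpace.countableBasis X with hcB
  set good : Set (Set X) := {V | V ∈ cB ∧ ∃ F : ℕ → Set X, (∀ i, IsCompact (F i)) ∧
    E ∩ V ⊆ ⋃ i, F i ∧ ∀ i, ubd (F i) ≤ t} with hgood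
  have hgoodcount : good.Countable :=
    (TopologicalSpace.countable_countableBasis X).mono fun V hV => hV.1
  have hopen : IsOpen (⋃₀ good) := isOpen_sUnion fun V hV =>
    (TopologicalSpace.isBasis_countableBasis X).isOpen hV.1
  set K : Set X := E \ ⋃₀ good with hK
  have hKc : IsCompact K := hc.diff hopen
  have hKE : K ⊆ E := Set.diff_subset
  -- the set defining mubd is bounded below
  have hSbdd : BddBelow {u : ℝ | ∃ F : ℕ → Set X, (∀ i, IsCompact (F i)) ∧ E ⊆ ⋃ i, F i ∧
      ∀ i, ubd (F i) ≤ u} := by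
    refine ⟨0, fun u hu => ?_⟩
    obtain ⟨F, hF1, hF2, hF3⟩ := hu
    obtain ⟨x, hx⟩ := hne
    obtain ⟨i, hi⟩ := mem_iUnion.mp (hF2 hx)
    exact le_trans (ubd_nonneg (hF1 i) ⟨x, hi⟩) (hF3 i)
  obtain ⟨G, hG1, hG2, hG3⟩ := combine_covers E ht0 good hgoodcount fun V hV => hV.2
  -- K is nonempty
  have hKne : K.Nonempty := by
    rcases Set.eq_empty_or_nonempty K with hKe | h
    · exfalso
      have hcov : E ⊆ ⋃ i, G i := by
        intro x hx
        have : x ∈ ⋃₀ good := by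
          by_contra hx2
          exact (Set.eq_empty_iff_forall_notMem.mp hKe x) ⟨hx, hx2⟩
        exact hG2 ⟨hx, this⟩
      have : mubd E ≤ t := csInf_le hSbdd ⟨G, hG1, hcov, hG3⟩
      linarith
    · exact h
  refine ⟨K, hKc, hKE, hKne, ?_⟩
  intro p hp ρ hρ ε hε
  obtain ⟨V, hVcB, hpV, hVball⟩ :=
    (TopologicalSpace.isBasis_countableBasis X).exists_subset_of_mem_open
      (mem_ball_self hρ) isOpen_ball
  set A : Set X := closure (K ∩ V) with hA
  have hAE : A ⊆ E := closure_minimal (fun x hx => hKE hx.1) hc.isClosed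
  have hAc : IsCompact A := hc.of_isClosed_subset isClosed_closure hAE
  have hAne : A.Nonempty := ⟨p, subset_closure ⟨hp, hpV⟩⟩
  have hAsub : A ⊆ K ∩ closedBall p ρ := by
    refine closure_minimal ?_ ((hKc.isClosed).inter isClosed_closedBall)
    exact fun x hx => ⟨hx.1, ball_subset_closedBall (hVball hx.2)⟩
  have hubdA : t < ubd A := by
    by_contra hle
    push_neg at hle
    have : V ∈ good := by
      refine ⟨hVcB, fun n => Nat.casesOn n A G, ?_, ?_, ?_⟩
      · intro i; cases i with
        | zero => exact hAc
        | succ n => exact hG1 n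
      · intro x hx
        by_cases hxg : x ∈ ⋃₀ good
        · obtain ⟨i, hi⟩ := mem_iUnion.mp (hG2 ⟨hx.1, hxg⟩)
          exact mem_iUnion.mpr ⟨i + 1, hi⟩
        · exact mem_iUnion.mpr ⟨0, subset_closure ⟨⟨hx.1, hxg⟩, hx.2⟩⟩
      · intro i; cases i with
        | zero => exact hle
        | succ n => exact hG3 n
    have : p ∈ ⋃₀ good := ⟨V, this, hpV⟩
    exact hp.2 this
  obtain ⟨r, hr0, hrε, hrN⟩ := freq_coverNum hAc hAne ht0 hubdA ε hε
  refine ⟨r, hr0, hrε, lt_of_lt_of_le hrN ?_⟩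
  exact_mod_cast coverNum_mono hAsub (hKc.inter_right isClosed_closedBall) hr0

end LemmaA
section Cells

structure MCell (X : Type*) where
  x : X
  ρ : ℝ
  a : ℝ
  b : ℝ

variable {X : Type*} [MetricSpace X]

def MChildren (K : Set X) (s : ℝ) (k : ℕ) (c : MCell X) (cs : List (MCell X)) : Prop :=
  cs ≠ [] ∧
  (∀ c' ∈ cs, c'.x ∈ K ∧ 0 < c'.ρ ∧ c'.ρ ≤ (1/2)^(k+1) ∧ c'.ρ ≤ c.ρ/100 ∧
    dist c'.x c.x ≤ c.ρ/4 ∧ c.a ≤ c'.a ∧ c'.b ≤ c.b ∧ c'.a < c'.b ∧ c'.b - c'.a ≤ c'.ρ ^ s) ∧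
  (∀ u : ℝ, c.a ≤ u → u < c.b → ∃ c' ∈ cs, c'.a ≤ u ∧ u < c'.b) ∧
  (∀ c₁ ∈ cs, ∀ c₂ ∈ cs, c₁ ≠ c₂ →
    4*c₁.ρ + 4*c₂.ρ < dist c₁.x c₂.x ∧ (c₁.b ≤ c₂.a ∨ c₂.b ≤ c₁.a))

set_option maxHeartbeats 1000000 in
lemma children_exist {K : Set X} (hK : IsCompact K) {s t : ℝ}
    (hs : 0 ≤ s) (hst : s < t)
    (HK : ∀ p ∈ K, ∀ ρ > (0:ℝ), ∀ ε > (0:ℝ), ∃ r : ℝ, 0 < r ∧ r < ε ∧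
      (r:ℝ) ^ (-t) < (coverNum (K ∩ closedBall p ρ) r : ℝ))
    (k : ℕ) (c : MCell X) (hx : c.x ∈ K) (hρ : 0 < c.ρ) (hab : c.a < c.b)
    (hba : c.b - c.a ≤ 1) :
    ∃ cs, MChildren K s k c cs := by
  classical
  have ht0 : 0 < t := lt_of_le_of_lt hs hst
  have hts : 0 < t - s := sub_pos.mpr hst
  set c₀ : ℝ := (18:ℝ) ^ (-(t/(t-s))) with hc₀def
  have hc₀ : 0 < c₀ := Real.rpow_pos_of_pos (by norm_num) _
  have hpow : (0:ℝ) < (1/2:ℝ)^(k+1) := by positivity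
  set ε' : ℝ := min (18 * (1/2)^(k+1)) (min (18*c.ρ/100) (min (18*c₀) 1)) with hε'def
  have hε' : 0 < ε' := by
    simp only [hε'def, lt_min_iff]
    refine ⟨by linarith, by linarith, by linarith, by norm_num⟩
  obtain ⟨r', hr'0, hr'ε, hr'N⟩ := HK c.x hx (c.ρ/4) (by positivity) ε' hε'
  have hAc : IsCompact (K ∩ closedBall c.x (c.ρ/4)) := hK.inter_right isClosed_closedBall
  obtain ⟨P, hPA, hPsep, hPcard⟩ := exists_separated hAc (r := r'/2) (by positivity)
  rw [(by ring : 2 * (r'/2) = r')] at hPcard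
  have hcard : (r':ℝ) ^ (-t) < (P.card : ℝ) :=
    lt_of_lt_of_le hr'N (by exact_mod_cast hPcard)
  have hr'1 : r' ≤ 1 := by
    have : ε' ≤ 1 := le_trans (min_le_right _ _) (le_trans (min_le_right _ _) (min_le_right _ _))
    linarith
  have h1le : (1:ℝ) ≤ (r':ℝ) ^ (-t) := by
    have hle1 : r' ^ t ≤ 1 := Real.rpow_le_one hr'0.le hr'1 ht0.le
    have hpos : 0 < r' ^ t := Real.rpow_pos_of_pos hr'0 t
    rw [Real.rpow_neg hr'0.le, inv_eq_one_div, le_div_iff₀ hpos]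
    linarith
  set n : ℕ := P.toList.length with hndef
  have hnn : n = P.card := Finset.length_toList P
  have hn0 : 0 < n := by
    rw [hnn]
    rw [Finset.card_pos]
    by_contra hP
    rw [Finset.not_nonempty_iff_eq_empty] at hP
    rw [hP] at hcard
    simp at hcard
    linarith
  have hnR : (0:ℝ) < (n:ℝ) := by exact_mod_cast hn0
  set ρ' : ℝ := r'/18 with hρ'def
  have hρ'0 : 0 < ρ' := by positivity
  set h : ℝ := (c.b - c.a)/n with hhdef
  have hh0 : 0 < h := by
    have := sub_pos.mpr hab
    positivity
  -- mass bound : h ≤ ρ'^s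
  have hρ'c₀ : ρ' ≤ c₀ := by
    have : ε' ≤ 18 * c₀ := le_trans (min_le_right _ _) (le_trans (min_le_right _ _) (min_le_left _ _))
    rw [hρ'def]; linarith
  have hmass : h ≤ ρ' ^ s := by
    have h1 : h ≤ 1/(n:ℝ) := by
      rw [hhdef, div_le_div_iff₀ hnR hnR]
      nlinarith
    have h2 : 1/(n:ℝ) < r' ^ t := by
      have hpos : (0:ℝ) < r' ^ t := Real.rpow_pos_of_pos hr'0 t
      rw [Real.rpow_neg hr'0.le] at hcard
      have hcard' : (r' ^ t)⁻¹ < (n:ℝ) := by rw [hnn]; exact_mod_cast hcard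
      have hinv : r' ^ t * (r' ^ t)⁻¹ = 1 := mul_inv_cancel₀ (ne_of_gt hpos)
      rw [div_lt_iff₀ hnR]
      nlinarith [mul_lt_mul_of_pos_left hcard' hpos]
    have h3 : r' ^ t ≤ ρ' ^ s := by
      have hr'ρ : r' = 18 * ρ' := by rw [hρ'def]; ring
      rw [hr'ρ, Real.mul_rpow (by norm_num) hρ'0.le]
      have hsplit : ρ' ^ t = ρ' ^ (t-s) * ρ' ^ s := by
        rw [← Real.rpow_add hρ'0]; ring_nf
      rw [hsplit, ← mul_assoc]
      have hfac : (18:ℝ) ^ t * ρ' ^ (t-s) ≤ 1 := by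
        have hmono : ρ' ^ (t-s) ≤ c₀ ^ (t-s) :=
          Real.rpow_le_rpow hρ'0.le hρ'c₀ hts.le
        have hc₀pow : c₀ ^ (t-s) = (18:ℝ) ^ (-t) := by
          rw [hc₀def, ← Real.rpow_mul (by norm_num : (0:ℝ) ≤ 18)]
          congr 1
          field_simp
        calc (18:ℝ) ^ t * ρ' ^ (t-s) ≤ (18:ℝ) ^ t * (18:ℝ) ^ (-t) := by
              rw [← hc₀pow]
              exact mul_le_mul_of_nonneg_left hmono (Real.rpow_nonneg (by norm_num) t)
          _ = 1 := by rw [← Real.rpow_add (by norm_num : (0:ℝ) < 18)]; simp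
      calc (18:ℝ) ^ t * ρ' ^ (t-s) * ρ' ^ s ≤ 1 * ρ' ^ s :=
            mul_le_mul_of_nonneg_right hfac (Real.rpow_nonneg hρ'0.le s)
        _ = ρ' ^ s := one_mul _
    linarith
  -- the children
  refine ⟨List.ofFn (fun j : Fin n =>
    MCell.mk (P.toList.get j) ρ' (c.a + j*h) (c.a + (j+1)*h)), ?_, ?_, ?_, ?_⟩
  · have : (List.ofFn (fun j : Fin n =>
        MCell.mk (P.toList.get j) ρ' (c.a + j*h) (c.a + (j+1)*h))).length = n := by
      rw [List.length_ofFn]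
    intro hnil
    rw [hnil] at this
    simp at this
    omega
  · intro c' hc'
    rw [List.mem_ofFn] at hc'
    obtain ⟨j, rfl⟩ := hc'
    have hpP : P.toList.get j ∈ P := Finset.mem_toList.mp (P.toList.get_mem j)
    have hpA := hPA (Finset.mem_coe.mpr hpP)
    have hj1n : ((j:ℕ):ℝ) + 1 ≤ (n:ℝ) := by
      have := j.isLt
      exact_mod_cast Nat.succ_le_of_lt this
    have hjnn : (0:ℝ) ≤ ((j:ℕ):ℝ) := by positivity
    refine ⟨hpA.1, hρ'0, ?_, ?_, mem_closedBall.mp hpA.2, ?_, ?_, ?_, ?_⟩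
    · have : ε' ≤ 18 * (1/2)^(k+1) := min_le_left _ _
      rw [hρ'def]; linarith
    · have : ε' ≤ 18*c.ρ/100 := le_trans (min_le_right _ _) (min_le_left _ _)
      rw [hρ'def]; linarith
    · simp only; nlinarith
    · simp only
      have : ((j:ℕ):ℝ) + 1 ≤ (n:ℝ) := hj1n
      have hnh : (n:ℝ) * h = c.b - c.a := by
        rw [hhdef]; field_simp
      nlinarith
    · simp only; nlinarith
    · simp only
      have : c.a + (((j:ℕ):ℝ)+1)*h - (c.a + ((j:ℕ):ℝ)*h) = h := by ring
      rw [this]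
      exact hmass
  · intro u hu1 hu2
    have hnh : (n:ℝ) * h = c.b - c.a := by rw [hhdef]; field_simp
    have hdiv0 : 0 ≤ (u - c.a)/h := by
      have : 0 ≤ u - c.a := by linarith
      positivity
    set j₀ : ℕ := ⌊(u - c.a)/h⌋₊ with hj₀def
    have hjlt : j₀ < n := by
      rw [hj₀def, Nat.floor_lt hdiv0, div_lt_iff₀ hh0]
      nlinarith
    refine ⟨_, List.mem_ofFn.mpr ⟨⟨j₀, hjlt⟩, rfl⟩, ?_, ?_⟩
    · simp only
      have h1 : (j₀:ℝ) ≤ (u - c.a)/h := Nat.floor_le hdiv0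
      rw [le_div_iff₀ hh0] at h1
      linarith
    · simp only
      have h1 : (u - c.a)/h < (j₀:ℝ) + 1 := Nat.lt_floor_add_one _
      rw [div_lt_iff₀ hh0] at h1
      linarith
  · intro c₁ hc₁ c₂ hc₂ hne
    rw [List.mem_ofFn] at hc₁ hc₂
    obtain ⟨j₁, rfl⟩ := hc₁
    obtain ⟨j₂, rfl⟩ := hc₂
    have hjne : j₁ ≠ j₂ := fun hj => hne (by rw [hj])
    have hpne : P.toList.get j₁ ≠ P.toList.get j₂ := by
      intro hpp
      exact hjne ((List.Nodup.get_inj_iff (Finset.nodup_toList P)).mp hpp)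
    have hp₁ : P.toList.get j₁ ∈ P := Finset.mem_toList.mp (P.toList.get_mem j₁)
    have hp₂ : P.toList.get j₂ ∈ P := Finset.mem_toList.mp (P.toList.get_mem j₂)
    constructor
    · have := hPsep _ hp₁ _ hp₂ hpne
      simp only
      rw [hρ'def]
      linarith
    · simp only
      have hjj : (j₁:ℕ) < (j₂:ℕ) ∨ (j₂:ℕ) < (j₁:ℕ) := by
        rcases Nat.lt_trichotomy (j₁:ℕ) (j₂:ℕ) with h | h | h
        · exact Or.inl h
        · exact absurd (Fin.ext h) hjne
        · exact Or.inr h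
      rcases hjj with h' | h'
      · left
        have : ((j₁:ℕ):ℝ) + 1 ≤ ((j₂:ℕ):ℝ) := by exact_mod_cast Nat.succ_le_of_lt h'
        nlinarith
      · right
        have : ((j₂:ℕ):ℝ) + 1 ≤ ((j₁:ℕ):ℝ) := by exact_mod_cast Nat.succ_le_of_lt h'
        nlinarith

end Cells
section Gens

variable {X : Type*} [MetricSpace X]

structure MInv (K : Set X) (s : ℝ) (k : ℕ) (G : List (MCell X)) : Prop where
  ne : G ≠ []
  mem : ∀ c ∈ G, c.x ∈ K
  rpos : ∀ c ∈ G, 0 < c.ρ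
  rle : ∀ c ∈ G, c.ρ ≤ (1/2)^k
  ab : ∀ c ∈ G, c.a < c.b
  a0 : ∀ c ∈ G, 0 ≤ c.a
  b1 : ∀ c ∈ G, c.b ≤ 1
  mass : ∀ c ∈ G, c.b - c.a ≤ c.ρ ^ s
  cover : ∀ u : ℝ, 0 ≤ u → u < 1 → ∃ c ∈ G, c.a ≤ u ∧ u < c.b
  sep : ∀ c ∈ G, ∀ c' ∈ G, c ≠ c' → 4*c.ρ + 4*c'.ρ < dist c.x c'.x
  dis : ∀ c ∈ G, ∀ c' ∈ G, c ≠ c' → c.b ≤ c'.a ∨ c'.b ≤ c.a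

def MTrans (G G' : List (MCell X)) : Prop :=
  ∀ c' ∈ G', ∃ c ∈ G, c.a ≤ c'.a ∧ c'.b ≤ c.b ∧ dist c'.x c.x ≤ c.ρ/4 ∧ c'.ρ ≤ c.ρ/100

lemma step_exists {K : Set X} (hK : IsCompact K) {s t : ℝ} (hs : 0 ≤ s) (hst : s < t)
    (HK : ∀ p ∈ K, ∀ ρ > (0:ℝ), ∀ ε > (0:ℝ), ∃ r : ℝ, 0 < r ∧ r < ε ∧
      (r:ℝ) ^ (-t) < (coverNum (K ∩ closedBall p ρ) r : ℝ))
    (k : ℕ) (G : List (MCell X)) (hG : MInv K s k G) :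
    ∃ G' : List (MCell X), MInv K s (k+1) G' ∧ MTrans G G' := by
  classical
  have hch : ∀ c : MCell X, ∃ cs : List (MCell X), c ∈ G → MChildren K s k c cs := by
    intro c
    by_cases hc : c ∈ G
    · obtain ⟨cs, hcs⟩ := children_exist hK hs hst HK k c (hG.mem c hc) (hG.rpos c hc)
        (hG.ab c hc) (by have := hG.a0 c hc; have := hG.b1 c hc; linarith)
      exact ⟨cs, fun _ => hcs⟩
    · exact ⟨[], fun h => absurd h hc⟩
  choose f hf using hch
  refine ⟨G.attach.flatMap (fun c => f c.1), ?_, ?_⟩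
  · -- MInv (k+1)
    have hmem' : ∀ c' ∈ G.attach.flatMap (fun c => f c.1),
        ∃ c ∈ G, c' ∈ f c := by
      intro c' hc'
      rw [List.mem_flatMap] at hc'
      obtain ⟨⟨c, hcG⟩, -, hc'f⟩ := hc'
      exact ⟨c, hcG, hc'f⟩
    constructor
    · -- ne
      obtain ⟨c0, hc0⟩ := List.exists_mem_of_ne_nil G hG.ne
      have h1 := hf c0 hc0
      obtain ⟨c', hc'⟩ := List.exists_mem_of_ne_nil (f c0) h1.1
      exact List.ne_nil_of_mem (List.mem_flatMap.mpr ⟨⟨c0, hc0⟩, List.mem_attach _ _, hc'⟩)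
    · intro c' hc'
      obtain ⟨c, hcG, hcf⟩ := hmem' c' hc'
      exact ((hf c hcG).2.1 c' hcf).1
    · intro c' hc'
      obtain ⟨c, hcG, hcf⟩ := hmem' c' hc'
      exact ((hf c hcG).2.1 c' hcf).2.1
    · intro c' hc'
      obtain ⟨c, hcG, hcf⟩ := hmem' c' hc'
      exact ((hf c hcG).2.1 c' hcf).2.2.1
    · intro c' hc'
      obtain ⟨c, hcG, hcf⟩ := hmem' c' hc'
      exact ((hf c hcG).2.1 c' hcf).2.2.2.2.2.2.2.1
    · intro c' hc'
      obtain ⟨c, hcG, hcf⟩ := hmem' c' hc'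
      have h1 := ((hf c hcG).2.1 c' hcf).2.2.2.2.2.1
      have h2 := hG.a0 c hcG
      linarith
    · intro c' hc'
      obtain ⟨c, hcG, hcf⟩ := hmem' c' hc'
      have h1 := ((hf c hcG).2.1 c' hcf).2.2.2.2.2.2.1
      have h2 := hG.b1 c hcG
      linarith
    · intro c' hc'
      obtain ⟨c, hcG, hcf⟩ := hmem' c' hc'
      exact ((hf c hcG).2.1 c' hcf).2.2.2.2.2.2.2.2
    · intro u hu0 hu1
      obtain ⟨c, hcG, hcu1, hcu2⟩ := hG.cover u hu0 hu1
      obtain ⟨c', hc'f, hc'u⟩ := (hf c hcG).2.2.1 u hcu1 hcu2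
      exact ⟨c', List.mem_flatMap.mpr ⟨⟨c, hcG⟩, List.mem_attach _ _, hc'f⟩, hc'u⟩
    · -- sep
      intro c₁ hc₁ c₂ hc₂ hne
      obtain ⟨p₁, hp₁G, hp₁f⟩ := hmem' c₁ hc₁
      obtain ⟨p₂, hp₂G, hp₂f⟩ := hmem' c₂ hc₂
      by_cases hpp : p₁ = p₂
      · subst hpp
        exact ((hf p₁ hp₁G).2.2.2 c₁ hp₁f c₂ hp₂f hne).1
      · have hsep := hG.sep p₁ hp₁G p₂ hp₂G hpp
        have hd₁ := ((hf p₁ hp₁G).2.1 c₁ hp₁f).2.2.2.2.1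
        have hd₂ := ((hf p₂ hp₂G).2.1 c₂ hp₂f).2.2.2.2.1
        have hr₁ := ((hf p₁ hp₁G).2.1 c₁ hp₁f).2.2.2.1
        have hr₂ := ((hf p₂ hp₂G).2.1 c₂ hp₂f).2.2.2.1
        have hρ₁ := hG.rpos p₁ hp₁G
        have hρ₂ := hG.rpos p₂ hp₂G
        have htri : dist p₁.x p₂.x ≤ dist c₁.x p₁.x + dist c₁.x p₂.x := by
          rw [dist_comm c₁.x p₁.x]
          exact dist_triangle _ _ _
        have htri2 : dist c₁.x p₂.x ≤ dist c₁.x c₂.x + dist c₂.x p₂.x :=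
          dist_triangle _ _ _
        linarith
    · -- dis
      intro c₁ hc₁ c₂ hc₂ hne
      obtain ⟨p₁, hp₁G, hp₁f⟩ := hmem' c₁ hc₁
      obtain ⟨p₂, hp₂G, hp₂f⟩ := hmem' c₂ hc₂
      by_cases hpp : p₁ = p₂
      · subst hpp
        exact ((hf p₁ hp₁G).2.2.2 c₁ hp₁f c₂ hp₂f hne).2
      · have hdis := hG.dis p₁ hp₁G p₂ hp₂G hpp
        have ha₁ := ((hf p₁ hp₁G).2.1 c₁ hp₁f).2.2.2.2.2.1
        have hb₁ := ((hf p₁ hp₁G).2.1 c₁ hp₁f).2.2.2.2.2.2.1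
        have ha₂ := ((hf p₂ hp₂G).2.1 c₂ hp₂f).2.2.2.2.2.1
        have hb₂ := ((hf p₂ hp₂G).2.1 c₂ hp₂f).2.2.2.2.2.2.1
        rcases hdis with h | h
        · left; linarith
        · right; linarith
  · -- MTrans
    intro c' hc'
    rw [List.mem_flatMap] at hc'
    obtain ⟨⟨c, hcG⟩, -, hc'f⟩ := hc'
    have h := (hf c hcG).2.1 c' hc'f
    exact ⟨c, hcG, h.2.2.2.2.2.1, h.2.2.2.2.2.2.1, h.2.2.2.2.1, h.2.2.2.1⟩

end Gens
section Construction

variable {X : Type*} [MetricSpace X]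

noncomputable def gens {K : Set X} (hK : IsCompact K) {s t : ℝ} (hs : 0 ≤ s) (hst : s < t)
    (HK : ∀ p ∈ K, ∀ ρ > (0:ℝ), ∀ ε > (0:ℝ), ∃ r : ℝ, 0 < r ∧ r < ε ∧
      (r:ℝ) ^ (-t) < (coverNum (K ∩ closedBall p ρ) r : ℝ))
    (G0 : List (MCell X)) (h0 : MInv K s 0 G0) (k : ℕ) :
    {G : List (MCell X) // MInv K s k G} :=
  Nat.rec ⟨G0, h0⟩ (fun k p => ⟨(step_exists hK hs hst HK k p.1 p.2).choose,
    (step_exists hK hs hst HK k p.1 p.2).choose_spec.1⟩) k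

lemma gens_trans {K : Set X} (hK : IsCompact K) {s t : ℝ} (hs : 0 ≤ s) (hst : s < t)
    (HK : ∀ p ∈ K, ∀ ρ > (0:ℝ), ∀ ε > (0:ℝ), ∃ r : ℝ, 0 < r ∧ r < ε ∧
      (r:ℝ) ^ (-t) < (coverNum (K ∩ closedBall p ρ) r : ℝ))
    (G0 : List (MCell X)) (h0 : MInv K s 0 G0) (k : ℕ) :
    MTrans (gens hK hs hst HK G0 h0 k).1 (gens hK hs hst HK G0 h0 (k+1)).1 :=
  (step_exists hK hs hst HK k (gens hK hs hst HK G0 h0 k).1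
    (gens hK hs hst HK G0 h0 k).2).choose_spec.2

lemma exists_pos_le_list (l : List (MCell X)) (h : ∀ c ∈ l, 0 < c.ρ) :
    ∃ r0 > (0:ℝ), ∀ c ∈ l, r0 ≤ c.ρ := by
  induction l with
  | nil => exact ⟨1, by norm_num, fun c hc => absurd hc List.not_mem_nil⟩
  | cons c l ih =>
    obtain ⟨r0, hr0, hr0le⟩ := ih (fun c' hc' => h c' (List.mem_cons_of_mem _ hc'))
    have hc : 0 < c.ρ := h c List.mem_cons_self
    refine ⟨min r0 c.ρ, lt_min hr0 hc, fun c' hc' => ?_⟩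
    rcases List.mem_cons.mp hc' with rfl | hc'
    · exact min_le_right _ _
    · exact le_trans (min_le_left _ _) (hr0le c' hc')

lemma construction [CompleteSpace X] [MeasurableSpace X] [BorelSpace X]
    {K : Set X} (hK : IsCompact K) (hKne : K.Nonempty) {s t : ℝ} (hs : 0 ≤ s) (hst : s < t)
    (HK : ∀ p ∈ K, ∀ ρ > (0:ℝ), ∀ ε > (0:ℝ), ∃ r : ℝ, 0 < r ∧ r < ε ∧
      (r:ℝ) ^ (-t) < (coverNum (K ∩ closedBall p ρ) r : ℝ)) :
    ∃ μ : Measure X, IsProbabilityMeasure μ ∧ msupport μ ⊆ K ∧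
      ∀ x : X, ∀ ε > (0:ℝ), ∃ r : ℝ, 0 < r ∧ r < ε ∧
        μ (closedBall x r) ≤ ENNReal.ofReal (r ^ s) := by
  classical
  obtain ⟨p0, hp0⟩ := hKne
  have h0 : MInv K s 0 [MCell.mk p0 1 0 1] := by
    constructor
    · simp
    · intro c hc; rw [List.mem_singleton] at hc; subst hc; exact hp0
    · intro c hc; rw [List.mem_singleton] at hc; subst hc; norm_num
    · intro c hc; rw [List.mem_singleton] at hc; subst hc; norm_num
    · intro c hc; rw [List.mem_singleton] at hc; subst hc; norm_num
    · intro c hc; rw [List.mem_singleton] at hc; subst hc; norm_num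
    · intro c hc; rw [List.mem_singleton] at hc; subst hc; norm_num
    · intro c hc; rw [List.mem_singleton] at hc; subst hc
      simp only [Real.one_rpow]; norm_num
    · intro u hu0 hu1
      exact ⟨MCell.mk p0 1 0 1, List.mem_singleton_self _, hu0, hu1⟩
    · intro c hc c' hc' hne
      rw [List.mem_singleton] at hc hc'
      exact absurd (hc.trans hc'.symm) hne
    · intro c hc c' hc' hne
      rw [List.mem_singleton] at hc hc'
      exact absurd (hc.trans hc'.symm) hne
  set Gk : ℕ → List (MCell X) := fun k => (gens hK hs hst HK _ h0 k).1 with hGk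
  have hInv : ∀ k, MInv K s k (Gk k) := fun k => (gens hK hs hst HK _ h0 k).2
  have hTr : ∀ k, MTrans (Gk k) (Gk (k+1)) := fun k => gens_trans hK hs hst HK _ h0 k
  -- the cell containing u at generation k
  have hcellex : ∀ (k : ℕ) (u : ℝ), ∃ c : MCell X,
      ((0 ≤ u ∧ u < 1) → (c ∈ Gk k ∧ c.a ≤ u ∧ u < c.b)) ∧
      (¬(0 ≤ u ∧ u < 1) → c = MCell.mk p0 1 0 1) := by
    intro k u
    by_cases h : 0 ≤ u ∧ u < 1
    · obtain ⟨c, hcG, hc1, hc2⟩ := (hInv k).cover u h.1 h.2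
      exact ⟨c, fun _ => ⟨hcG, hc1, hc2⟩, fun h' => absurd h h'⟩
    · exact ⟨MCell.mk p0 1 0 1, fun h' => absurd h' h, fun _ => rfl⟩
  choose cell hcellspec using hcellex
  have hcmem : ∀ k u, 0 ≤ u → u < 1 →
      cell k u ∈ Gk k ∧ (cell k u).a ≤ u ∧ u < (cell k u).b :=
    fun k u h0' h1' => (hcellspec k u).1 ⟨h0', h1'⟩
  have hcout : ∀ k u, ¬(0 ≤ u ∧ u < 1) → cell k u = MCell.mk p0 1 0 1 :=
    fun k u h => (hcellspec k u).2 h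
  set gseq : ℕ → ℝ → X := fun k u => (cell k u).x with hgseq
  have huniq : ∀ (k : ℕ) (c c' : MCell X), c ∈ Gk k → c' ∈ Gk k → ∀ u : ℝ,
      c.a ≤ u → u < c.b → c'.a ≤ u → u < c'.b → c = c' := by
    intro k c c' hc hc' u h1 h2 h3 h4
    by_contra hne
    rcases (hInv k).dis c hc c' hc' hne with h | h <;> linarith
  have hchain : ∀ (k : ℕ) (u : ℝ), 0 ≤ u → u < 1 →
      dist (cell (k+1) u).x (cell k u).x ≤ (cell k u).ρ/4 ∧
      (cell (k+1) u).ρ ≤ (cell k u).ρ/100 := by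
    intro k u h0' h1'
    obtain ⟨hm', ha', hb'⟩ := hcmem (k+1) u h0' h1'
    obtain ⟨c, hcG, haa, hbb, hdist, hρρ⟩ := hTr k (cell (k+1) u) hm'
    obtain ⟨hm, ha, hb⟩ := hcmem k u h0' h1'
    have : c = cell k u := huniq k c (cell k u) hcG hm u
      (le_trans haa ha') (lt_of_lt_of_le hb' hbb) ha hb
    rw [← this]
    exact ⟨hdist, hρρ⟩
  have hgeom : ∀ (k : ℕ) (u : ℝ), 0 ≤ u → u < 1 → ∀ m : ℕ,
      dist (cell (k+m) u).x (cell k u).x ≤ (cell k u).ρ/2 * (1 - (1/100:ℝ)^m) ∧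
      (cell (k+m) u).ρ ≤ (cell k u).ρ * (1/100:ℝ)^m := by
    intro k u h0' h1' m
    induction m with
    | zero => simp
    | succ m ih =>
      obtain ⟨ihd, ihr⟩ := ih
      obtain ⟨hd, hr⟩ := hchain (k+m) u h0' h1'
      have hρ0 : 0 < (cell k u).ρ := (hInv k).rpos _ (hcmem k u h0' h1').1
      have hq0 : (0:ℝ) < (1/100:ℝ)^m := by positivity
      constructor
      · have htri : dist (cell (k+(m+1)) u).x (cell k u).x ≤
            dist (cell (k+m+1) u).x (cell (k+m) u).x + dist (cell (k+m) u).x (cell k u).x := by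
          rw [show k+(m+1) = k+m+1 from rfl]
          exact dist_triangle _ _ _
        have hpow : ((1:ℝ)/100)^(m+1) = (1/100)^m * (1/100) := pow_succ _ _
        rw [hpow]
        nlinarith
      · have hpow : ((1:ℝ)/100)^(m+1) = (1/100)^m * (1/100) := pow_succ _ _
        rw [show k+(m+1) = k+m+1 from rfl, hpow]
        nlinarith
  have hCauchy : ∀ u : ℝ, CauchySeq (fun k => gseq k u) := by
    intro u
    by_cases hu : 0 ≤ u ∧ u < 1
    · apply cauchySeq_of_le_geometric (1/2 : ℝ) 1 (by norm_num)
      intro n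
      have hρ0 := (hInv n).rle _ (hcmem n u hu.1 hu.2).1
      have := (hchain n u hu.1 hu.2).1
      rw [hgseq]
      simp only
      rw [dist_comm]
      have hp : (0:ℝ) < (1/2)^n := by positivity
      calc dist (cell (n+1) u).x (cell n u).x ≤ (cell n u).ρ/4 := this
        _ ≤ 1 * (1/2)^n := by rw [one_mul]; linarith
    · have : (fun k => gseq k u) = fun _ => p0 := by
        funext k
        rw [hgseq]
        simp only
        rw [hcout k u hu]
      rw [this]
      exact cauchySeq_const p0
  have hlimex : ∀ u : ℝ, ∃ y : X, Tendsto (fun k => gseq k u) atTop (𝓝 y) :=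
    fun u => cauchySeq_tendsto_of_complete (hCauchy u)
  choose g hg using hlimex
  -- measurability
  have hgseq_meas : ∀ k, Measurable (gseq k) := by
    intro k
    intro S hS
    have hpre : gseq k ⁻¹' S =
        (⋃ c ∈ {c : MCell X | c ∈ Gk k ∧ c.x ∈ S}, Set.Ico c.a c.b) ∪
        (if p0 ∈ S then (Set.Ico (0:ℝ) 1)ᶜ else ∅) := by
      ext u
      simp only [Set.mem_preimage, Set.mem_union, Set.mem_iUnion, Set.mem_setOf_eq]
      constructor
      · intro hu
        by_cases h01 : 0 ≤ u ∧ u < 1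
        · obtain ⟨hm, ha, hb⟩ := hcmem k u h01.1 h01.2
          exact Or.inl ⟨cell k u, ⟨hm, hu⟩, ha, hb⟩
        · right
          have := hcout k u h01
          rw [hgseq] at hu
          simp only at hu
          rw [this] at hu
          simp only [if_pos hu]
          intro hmem
          rw [Set.mem_Ico] at hmem
          exact h01 hmem
      · intro hu
        rcases hu with ⟨c, ⟨hcG, hcS⟩, ha, hb⟩ | hu
        · have h0' : 0 ≤ u := le_trans ((hInv k).a0 c hcG) ha
          have h1' : u < 1 := lt_of_lt_of_le hb ((hInv k).b1 c hcG)
          obtain ⟨hm, ha', hb'⟩ := hcmem k u h0' h1'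
          have : cell k u = c := huniq k (cell k u) c hm hcG u ha' hb' ha hb
          rw [hgseq]
          simp only
          rw [this]
          exact hcS
        · by_cases hp0S : p0 ∈ S
          · rw [if_pos hp0S] at hu
            have h01 : ¬(0 ≤ u ∧ u < 1) := by
              intro h
              exact hu (Set.mem_Ico.mpr h)
            rw [hgseq]
            simp only
            rw [hcout k u h01]
            exact hp0S
          · rw [if_neg hp0S] at hu
            exact absurd hu (Set.notMem_empty u)
    rw [hpre]
    refine MeasurableSet.union ?_ ?_
    · refine Set.Finite.measurableSet_biUnion ?_ (fun c _ => measurableSet_Ico)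
      exact (Gk k).finite_toSet.subset (fun c hc => hc.1)
    · split_ifs
      · exact measurableSet_Ico.compl
      · exact MeasurableSet.empty
  have hgmeas : Measurable g :=
    measurable_of_tendsto_metrizable hgseq_meas (tendsto_pi_nhds.mpr hg)
  set μ : Measure X := Measure.map g (volume.restrict (Set.Ico (0:ℝ) 1)) with hμ
  have happ : ∀ B : Set X, MeasurableSet B → μ B = volume (g ⁻¹' B ∩ Set.Ico 0 1) := by
    intro B hB
    rw [hμ, Measure.map_apply hgmeas hB, Measure.restrict_apply (hgmeas hB)]
  have hprob : IsProbabilityMeasure μ := by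
    constructor
    rw [happ _ MeasurableSet.univ]
    simp [Real.volume_Ico]
  have hgK : ∀ u : ℝ, 0 ≤ u → u < 1 → g u ∈ K := by
    intro u h0' h1'
    refine hK.isClosed.mem_of_tendsto (hg u) (Filter.Eventually.of_forall fun k => ?_)
    exact (hInv k).mem _ (hcmem k u h0' h1').1
  have hdistg : ∀ (k : ℕ) (u : ℝ), 0 ≤ u → u < 1 →
      dist (g u) (cell k u).x ≤ (cell k u).ρ/2 := by
    intro k u h0' h1'
    have hT : Tendsto (fun n => dist (gseq n u) (cell k u).x) atTop
        (𝓝 (dist (g u) (cell k u).x)) := (hg u).dist tendsto_const_nhds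
    refine le_of_tendsto hT ?_
    rw [Filter.eventually_atTop]
    refine ⟨k, fun n hn => ?_⟩
    obtain ⟨m, rfl⟩ := Nat.exists_eq_add_of_le hn
    have := (hgeom k u h0' h1' m).1
    have hρ0 : 0 < (cell k u).ρ := (hInv k).rpos _ (hcmem k u h0' h1').1
    have hq0 : (0:ℝ) ≤ (1/100:ℝ)^m := by positivity
    rw [hgseq]
    simp only
    nlinarith
  refine ⟨μ, hprob, ?_, ?_⟩
  · -- msupport ⊆ K
    intro x hx
    by_contra hxK
    refine hx Kᶜ hK.isClosed.isOpen_compl hxK ?_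
    rw [happ _ hK.isClosed.measurableSet.compl]
    convert measure_empty
    · rw [Set.eq_empty_iff_forall_notMem]
      rintro u ⟨hgu, hu⟩
      rw [Set.mem_Ico] at hu
      exact hgu (hgK u hu.1 hu.2)
    · infer_instance
  · intro x ε hε
    obtain ⟨k, hk⟩ := exists_pow_lt_of_lt_one hε (by norm_num : (1/2:ℝ) < 1)
    by_cases hcase : ∃ c ∈ Gk k, dist x c.x ≤ 2*c.ρ
    · obtain ⟨c, hcG, hcx⟩ := hcase
      have hρ0 : 0 < c.ρ := (hInv k).rpos c hcG
      refine ⟨c.ρ, hρ0, lt_of_le_of_lt ((hInv k).rle c hcG) hk, ?_⟩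
      rw [happ _ measurableSet_closedBall]
      have hsub : g ⁻¹' closedBall x c.ρ ∩ Set.Ico 0 1 ⊆ Set.Ico c.a c.b := by
        rintro u ⟨hgu, hu⟩
        rw [Set.mem_Ico] at hu
        rw [Set.mem_preimage, mem_closedBall] at hgu
        obtain ⟨hm, ha, hb⟩ := hcmem k u hu.1 hu.2
        have hd := hdistg k u hu.1 hu.2
        have hcc : cell k u = c := by
          by_contra hne
          have hsep := (hInv k).sep (cell k u) hm c hcG hne
          have hρ'0 : 0 < (cell k u).ρ := (hInv k).rpos _ hm
          have htri : dist (cell k u).x c.x ≤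
              dist (cell k u).x (g u) + dist (g u) x + dist x c.x := by
            calc dist (cell k u).x c.x ≤ dist (cell k u).x (g u) + dist (g u) c.x :=
                  dist_triangle _ _ _
              _ ≤ dist (cell k u).x (g u) + (dist (g u) x + dist x c.x) := by
                  have := dist_triangle (g u) x c.x
                  linarith
              _ = _ := by ring
          rw [dist_comm (cell k u).x (g u)] at htri
          linarith
        rw [hcc] at ha hb
        exact Set.mem_Ico.mpr ⟨ha, hb⟩
      calc volume (g ⁻¹' closedBall x c.ρ ∩ Set.Ico 0 1) ≤ volume (Set.Ico c.a c.b) :=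
            measure_mono hsub
        _ = ENNReal.ofReal (c.b - c.a) := Real.volume_Ico
        _ ≤ ENNReal.ofReal (c.ρ ^ s) := ENNReal.ofReal_le_ofReal ((hInv k).mass c hcG)
    · push_neg at hcase
      obtain ⟨r0, hr0, hr0le⟩ := exists_pos_le_list (Gk k) (hInv k).rpos
      refine ⟨min r0 (ε/2), lt_min hr0 (by linarith), ?_, ?_⟩
      · calc min r0 (ε/2) ≤ ε/2 := min_le_right _ _
          _ < ε := by linarith
      · rw [happ _ measurableSet_closedBall]
        have hempty : g ⁻¹' closedBall x (min r0 (ε/2)) ∩ Set.Ico 0 1 = ∅ := by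
          rw [Set.eq_empty_iff_forall_notMem]
          rintro u ⟨hgu, hu⟩
          rw [Set.mem_Ico] at hu
          rw [Set.mem_preimage, mem_closedBall] at hgu
          obtain ⟨hm, -, -⟩ := hcmem k u hu.1 hu.2
          have hd := hdistg k u hu.1 hu.2
          have hfar := hcase (cell k u) hm
          have hr0le' := hr0le (cell k u) hm
          have htri : dist x (cell k u).x ≤ dist x (g u) + dist (g u) (cell k u).x :=
            dist_triangle _ _ _
          rw [dist_comm x (g u)] at htri
          have : min r0 (ε/2) ≤ r0 := min_le_left _ _
          linarith
        rw [hempty]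
        simp

end Construction
theorem stmt7 {d : ℕ} (E : Set (EuclideanSpace ℝ (Fin d)))
    (hc : IsCompact E) (hne : E.Nonempty) (s : ℝ) (hs : 0 ≤ s) (hlt : s < mubd E) :
    ∃ μ ∈ probOn E, ∀ x : EuclideanSpace ℝ (Fin d), ∀ ε : ℝ, 0 < ε →
      ∃ r : ℝ, 0 < r ∧ r < ε ∧ μ (closedBall x r) ≤ ENNReal.ofReal (r ^ s) := by
  set t : ℝ := (s + mubd E)/2 with ht
  have hst : s < t := by rw [ht]; linarith
  have htm : t < mubd E := by rw [ht]; linarith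
  have ht0 : 0 ≤ t := by linarith
  obtain ⟨K, hKc, hKE, hKne, HK⟩ := lemmaA E hc hne ht0 htm
  obtain ⟨μ, hprob, hsupp, hmain⟩ := construction hKc hKne hs hst HK
  exact ⟨μ, ⟨hprob, hsupp.trans hKE⟩, fun x ε hε => hmain x ε hε⟩
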